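/- In the triangular lattice, for every vertex v and every natural number d, the number of vertices at graph distance exactly d+1 from v equals 6(d+1). -/

import Mathlib

/-- Vertices of the triangular lattice: points `(x,y) ∈ ℤ²` with `x + y` even. -/
def TriPt : Type := {p : ℤ × ℤ // (p.1 + p.2) % 2 = 0}

/-- Adjacency offsets of the triangular lattice. -/
def triAdj (p q : ℤ × ℤ) : Prop :=
  (q.1 - p.1 = 0 ∧ q.2 - p.2 = 2) ∨ (q.1 - p.1 = 1 ∧ q.2 - p.2 = 1) ∨
  (q.1 - p.1 = 1 ∧ q.2 - p.2 = -1) ∨ (q.1 - p.1 = 0 ∧ q.2 - p.2 = -2) ∨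
  (q.1 - p.1 = -1 ∧ q.2 - p.2 = -1) ∨ (q.1 - p.1 = -1 ∧ q.2 - p.2 = 1)

/-- The triangular lattice as a simple graph. -/
def triGraph : SimpleGraph TriPt where
  Adj v w := triAdj v.1 w.1
  symm := by
    constructor
    rintro ⟨⟨a, b⟩, _⟩ ⟨⟨c, d⟩, _⟩ h
    unfold triAdj at *
    omega
  loopless := by
    constructor
    rintro ⟨⟨a, b⟩, _⟩ h
    unfold triAdj at h
    omega


def Fd (p : ℤ × ℤ) : ℕ := p.1.natAbs + (p.2.natAbs - p.1.natAbs) / 2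

lemma Fd_step (dx dy a b : ℤ) (h : triAdj (0,0) (a,b)) :
    Fd (dx + a, dy + b) ≤ Fd (dx, dy) + 1 := by
  simp only [triAdj] at h
  simp only [Fd]
  omega

lemma step_down (dx dy : ℤ) (hpar : (dx + dy) % 2 = 0) (n : ℕ) (h : Fd (dx, dy) = n + 1) :
    ∃ a b : ℤ, triAdj (0,0) (a,b) ∧ ((dx - a) + (dy - b)) % 2 = 0 ∧ Fd (dx - a, dy - b) = n := by
  simp only [Fd] at h ⊢
  simp only [triAdj]
  rcases lt_trichotomy dx 0 with hx | hx | hx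
  · rcases le_or_gt dy 0 with hy | hy
    · exact ⟨-1, -1, by omega, by omega, by omega⟩
    · exact ⟨-1, 1, by omega, by omega, by omega⟩
  · rcases le_or_gt dy 0 with hy | hy
    · exact ⟨0, -2, by omega, by omega, by omega⟩
    · exact ⟨0, 2, by omega, by omega, by omega⟩
  · rcases le_or_gt dy 0 with hy | hy
    · exact ⟨1, -1, by omega, by omega, by omega⟩
    · exact ⟨1, 1, by omega, by omega, by omega⟩

lemma par_sub (v w : TriPt) : ((w.1.1 - v.1.1) + (w.1.2 - v.1.2)) % 2 = 0 := by
  have hv := v.2; have hw := w.2; omega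

lemma exists_walk_of_Fd : ∀ (n : ℕ) (v w : TriPt),
    Fd (w.1.1 - v.1.1, w.1.2 - v.1.2) = n → ∃ p : triGraph.Walk v w, p.length = n := by
  intro n
  induction n with
  | zero =>
    intro v w h
    have hpar := par_sub v w
    have hw : w = v := by
      apply Subtype.ext
      have : w.1.1 = v.1.1 ∧ w.1.2 = v.1.2 := by simp only [Fd] at h; omega
      exact Prod.ext this.1 this.2
    subst hw
    exact ⟨SimpleGraph.Walk.nil, rfl⟩
  | succ n ih =>
    intro v w h
    obtain ⟨a, b, hadj, hpar', hF⟩ := step_down _ _ (par_sub v w) n h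
    have hupar : (((v.1.1 + a, v.1.2 + b) : ℤ × ℤ).1 + ((v.1.1 + a, v.1.2 + b) : ℤ × ℤ).2) % 2 = 0 := by
      have := par_sub v w; have := w.2; simp; omega
    refine ?_
    have hadj2 : triGraph.Adj v ⟨(v.1.1 + a, v.1.2 + b), hupar⟩ := by
      show triAdj v.1 (v.1.1 + a, v.1.2 + b)
      simp only [triAdj] at hadj ⊢
      omega
    have hF2 : Fd (w.1.1 - ((⟨(v.1.1 + a, v.1.2 + b), hupar⟩ : TriPt)).1.1,
        w.1.2 - ((⟨(v.1.1 + a, v.1.2 + b), hupar⟩ : TriPt)).1.2) = n := by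
      show Fd (w.1.1 - (v.1.1 + a), w.1.2 - (v.1.2 + b)) = n
      have e1 : w.1.1 - (v.1.1 + a) = w.1.1 - v.1.1 - a := by ring
      have e2 : w.1.2 - (v.1.2 + b) = w.1.2 - v.1.2 - b := by ring
      rw [e1, e2]; exact hF
    obtain ⟨p, hp⟩ := ih _ w hF2
    exact ⟨SimpleGraph.Walk.cons hadj2 p, (SimpleGraph.Walk.length_cons hadj2 p).trans (congrArg (· + 1) hp)⟩

lemma Fd_le_walk {v w : TriPt} (p : triGraph.Walk v w) :
    Fd (w.1.1 - v.1.1, w.1.2 - v.1.2) ≤ p.length := by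
  induction p with
  | nil => simp [Fd]
  | @cons v u w hadj p ih =>
    have hadj' : triAdj (0,0) ((u.1.1 - v.1.1, u.1.2 - v.1.2) : ℤ × ℤ) := by
      have : triAdj v.1 u.1 := hadj
      simp only [triAdj] at this ⊢
      omega
    have key := Fd_step (w.1.1 - u.1.1) (w.1.2 - u.1.2) (u.1.1 - v.1.1) (u.1.2 - v.1.2) hadj'
    have e1 : w.1.1 - u.1.1 + (u.1.1 - v.1.1) = w.1.1 - v.1.1 := by ring
    have e2 : w.1.2 - u.1.2 + (u.1.2 - v.1.2) = w.1.2 - v.1.2 := by ring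
    rw [e1, e2] at key
    simp only [SimpleGraph.Walk.length_cons]
    omega

lemma dist_eq (v w : TriPt) : triGraph.dist v w = Fd (w.1.1 - v.1.1, w.1.2 - v.1.2) := by
  obtain ⟨p, hp⟩ := exists_walk_of_Fd _ v w rfl
  have h1 : triGraph.dist v w ≤ Fd (w.1.1 - v.1.1, w.1.2 - v.1.2) := hp ▸ SimpleGraph.dist_le p
  have hr : triGraph.Reachable v w := ⟨p⟩
  obtain ⟨q, hq⟩ := hr.exists_walk_length_eq_dist
  have h2 := Fd_le_walk q
  omega

def hexPt (n i t : ℤ) : ℤ × ℤ :=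
  if i = 0 then (t, 2*n - t)
  else if i = 1 then (n, n - 2*t)
  else if i = 2 then (n - t, -n - t)
  else if i = 3 then (-t, -2*n + t)
  else if i = 4 then (-n, -n + 2*t)
  else (-n + t, n + t)

noncomputable def sphF (n : ℕ) : Finset (ℤ × ℤ) :=
  ((Finset.Ico (0:ℤ) 6) ×ˢ (Finset.Ico (0:ℤ) (n:ℤ))).image (fun q => hexPt n q.1 q.2)

lemma hex_injOn (n : ℕ) :
    Set.InjOn (fun q : ℤ × ℤ => hexPt n q.1 q.2)
      (((Finset.Ico (0:ℤ) 6) ×ˢ (Finset.Ico (0:ℤ) (n:ℤ)) : Finset (ℤ × ℤ)) : Set (ℤ × ℤ)) := by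
  rintro ⟨i, t⟩ hm ⟨j, s⟩ hm' h
  simp only [Finset.coe_sort_coe, Finset.mem_coe, Finset.mem_product, Finset.mem_Ico] at hm hm'
  obtain ⟨⟨hi0, hi6⟩, ht0, htn⟩ := hm
  obtain ⟨⟨hj0, hj6⟩, hs0, hsn⟩ := hm'
  simp only at h
  have : (i, t) = (j, s) := by
    interval_cases i <;> interval_cases j <;>
      simp only [hexPt, Prod.ext_iff, if_true, if_false] at h ⊢ <;> norm_num at h ⊢ <;> omega
  exact this

lemma sphF_card (n : ℕ) : (sphF n).card = 6 * n := by
  rw [sphF, Finset.card_image_of_injOn (hex_injOn n), Finset.card_product]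
  simp [Int.card_Ico]

lemma mem_sphF (n : ℕ) (hn : 1 ≤ n) (p : ℤ × ℤ) :
    p ∈ sphF n ↔ (p.1 + p.2) % 2 = 0 ∧ Fd p = n := by
  obtain ⟨x, y⟩ := p
  simp only [sphF, Finset.mem_image, Finset.mem_product, Finset.mem_Ico, Fd]
  constructor
  · rintro ⟨⟨i, t⟩, ⟨⟨hi0, hi6⟩, ht0, htn⟩, h⟩
    simp only at h
    interval_cases i <;> (simp [hexPt, Prod.ext_iff] at h; exact ⟨by omega, by omega⟩)
  · rintro ⟨hpar, hF⟩
    by_cases hxn : x = (n : ℤ)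
    · by_cases hy : y = -(n : ℤ)
      · exact ⟨(2, 0), ⟨⟨by norm_num, by norm_num⟩, le_refl 0, by simp; omega⟩,
          by simp [hexPt]; omega⟩
      · refine ⟨(1, (n - y) / 2), ⟨⟨by norm_num, by norm_num⟩, by omega, by omega⟩, ?_⟩
        simp [hexPt, Prod.ext_iff]; omega
    · by_cases hxn' : x = -(n : ℤ)
      · by_cases hy : y = (n : ℤ)
        · refine ⟨(5, 0), ⟨⟨by norm_num, by norm_num⟩, le_refl 0, by simp; omega⟩, ?_⟩
          simp [hexPt, Prod.ext_iff]; omega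
        · refine ⟨(4, (y + n) / 2), ⟨⟨by norm_num, by norm_num⟩, by omega, by omega⟩, ?_⟩
          simp [hexPt, Prod.ext_iff]; omega
      · by_cases hy0 : 0 < y
        · by_cases hx0 : 0 ≤ x
          · refine ⟨(0, x), ⟨⟨le_refl 0, by norm_num⟩, by omega, by omega⟩, ?_⟩
            simp [hexPt, Prod.ext_iff]; omega
          · refine ⟨(5, x + n), ⟨⟨by norm_num, by norm_num⟩, by omega, by omega⟩, ?_⟩
            simp [hexPt, Prod.ext_iff]; omega
        · by_cases hx0 : 0 < x
          · refine ⟨(2, n - x), ⟨⟨by norm_num, by norm_num⟩, by omega, by omega⟩, ?_⟩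
            simp [hexPt, Prod.ext_iff]; omega
          · refine ⟨(3, -x), ⟨⟨by norm_num, by norm_num⟩, by omega, by omega⟩, ?_⟩
            simp [hexPt, Prod.ext_iff]; omega

/-- In the triangular lattice, exactly `6(d+1)` vertices are at graph distance
`d+1` from any vertex `v`. -/
theorem stmt7 (v : TriPt) (d : ℕ) :
    {w : TriPt | triGraph.dist v w = d + 1}.ncard = 6 * (d + 1) := by
  have hset : {w : TriPt | triGraph.dist v w = d + 1}
      = {w : TriPt | Fd (w.1.1 - v.1.1, w.1.2 - v.1.2) = d + 1} := by
    ext w; simp [dist_eq]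
  rw [hset]
  have hinj : Function.Injective
      (fun w : TriPt => ((w.1.1 - v.1.1, w.1.2 - v.1.2) : ℤ × ℤ)) := by
    rintro ⟨⟨a, b⟩, _⟩ ⟨⟨c, e⟩, _⟩ h
    simp only [Prod.ext_iff] at h
    apply Subtype.ext
    apply Prod.ext <;> simp_all
  have himg : (fun w : TriPt => ((w.1.1 - v.1.1, w.1.2 - v.1.2) : ℤ × ℤ)) ''
      {w : TriPt | Fd (w.1.1 - v.1.1, w.1.2 - v.1.2) = d + 1} = ↑(sphF (d + 1)) := by
    ext p
    constructor
    · rintro ⟨w, hw, rfl⟩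
      rw [Finset.mem_coe, mem_sphF _ (by omega)]
      exact ⟨par_sub v w, hw⟩
    · intro hp
      rw [Finset.mem_coe, mem_sphF _ (by omega)] at hp
      obtain ⟨hpar, hFd⟩ := hp
      have hwpar : (((v.1.1 + p.1, v.1.2 + p.2) : ℤ × ℤ).1
          + ((v.1.1 + p.1, v.1.2 + p.2) : ℤ × ℤ).2) % 2 = 0 := by
        have := v.2; simp; omega
      refine ⟨⟨(v.1.1 + p.1, v.1.2 + p.2), hwpar⟩, ?_, ?_⟩
      · show Fd (v.1.1 + p.1 - v.1.1, v.1.2 + p.2 - v.1.2) = d + 1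
        have he : ((v.1.1 + p.1 - v.1.1, v.1.2 + p.2 - v.1.2) : ℤ × ℤ) = (p.1, p.2) := by
          apply Prod.ext <;> simp
        rw [he]
        simpa using hFd
      · show ((v.1.1 + p.1 - v.1.1, v.1.2 + p.2 - v.1.2) : ℤ × ℤ) = p
        apply Prod.ext <;> simp
  rw [← Set.ncard_image_of_injective _ hinj, himg, Set.ncard_coe_finset, sphF_card]
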